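/- Let U > 0. For ε ∈ (0,1) define σ(ε) = min{k ∈ ℕ, k ≥ 1 : (k+1)·ε^k − k·ε^{k−1} < C/((1 − ε)·U)} when C < (1 − ε)·U, and σ(ε) = 0 when C ≥ (1 − ε)·U. (i) If C ∈ (U/8, U), then σ is nonincreasing on (0,1). (ii) If C ≥ U, then σ(ε) = 0 for all ε ∈ (0,1). -/
import Mathlib


/-- Corollary 1, high-cost cases: with
`σ ε = min {k ≥ 1 : (k+1)·ε^k - k·ε^(k-1) < C/((1-ε)U)}` when `C < (1-ε)U`,
and `σ ε = 0` when `C ≥ (1-ε)U`: (i) if `C ∈ (U/8, U)` then `σ` is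
nonincreasing on `(0,1)`; (ii) if `C ≥ U` then `σ ε = 0` for all `ε ∈ (0,1)`. -/
theorem induced_prompt_number_high_cost
    (U C : ℝ) (hU : 0 < U)
    (σ : ℝ → ℕ)
    (hσ : ∀ ε ∈ Set.Ioo (0 : ℝ) 1,
      (C < (1 - ε) * U →
        IsLeast {k : ℕ | 1 ≤ k ∧
          ((k : ℝ) + 1) * ε ^ k - (k : ℝ) * ε ^ (k - 1) < C / ((1 - ε) * U)}
          (σ ε)) ∧
      ((1 - ε) * U ≤ C → σ ε = 0)) :
    (C ∈ Set.Ioo (U / 8) U →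
      ∀ ε₁ ∈ Set.Ioo (0 : ℝ) 1, ∀ ε₂ ∈ Set.Ioo (0 : ℝ) 1,
        ε₁ ≤ ε₂ → σ ε₂ ≤ σ ε₁) ∧
    (U ≤ C → ∀ ε ∈ Set.Ioo (0 : ℝ) 1, σ ε = 0) := by
  constructor
  · rintro ⟨hC8, hCU⟩ ε₁ hε₁ ε₂ hε₂ h12
    -- helper: if C < (1-ε)U then σ ε = 1
    have key : ∀ ε ∈ Set.Ioo (0 : ℝ) 1, C < (1 - ε) * U → σ ε = 1 := by
      intro ε hε hlt
      have hpos : (0 : ℝ) < (1 - ε) * U := lt_trans (lt_of_le_of_lt (by positivity) hC8) hlt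
      have hmem : 1 ∈ {k : ℕ | 1 ≤ k ∧
          ((k : ℝ) + 1) * ε ^ k - (k : ℝ) * ε ^ (k - 1) < C / ((1 - ε) * U)} := by
        constructor
        · exact le_refl 1
        · push_cast
          rw [lt_div_iff₀ hpos]
          have h34 : (2 * ε - 1) * ((1 - ε) * U) ≤ U / 8 := by
            have : (2 * ε - 1) * (1 - ε) ≤ 1 / 8 := by nlinarith [sq_nonneg (ε - 3/4)]
            nlinarith
          simp only [pow_one, pow_zero]
          nlinarith
      have hle := (hσ ε hε).1 hlt
      exact le_antisymm (hle.2 hmem) hle.1.1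
    by_cases h2 : C < (1 - ε₂) * U
    · have h1 : C < (1 - ε₁) * U := by nlinarith
      rw [key ε₁ hε₁ h1, key ε₂ hε₂ h2]
    · rw [(hσ ε₂ hε₂).2 (not_lt.1 h2)]
      exact Nat.zero_le _
  · intro hUC ε hε
    exact (hσ ε hε).2 (by nlinarith [hε.1])
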